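/- Let A and B be categories with finite coproducts and F : A → B a functor preserving the initial object. If there is a natural family of isomorphisms ψ_{X,Y} : FX + FY ≅ F(X+Y), then F preserves finite coproducts, i.e., the canonical map FX + FY → F(X+Y) induced by F(i) and F(j) is an isomorphism for all X, Y. -/

import Mathlib

open CategoryTheory CategoryTheory.Limits

theorem stmt_16 {A B : Type*} [Category A] [Category B]
    [HasFiniteCoproducts A] [HasFiniteCoproducts B]
    (F : A ⥤ B) (h0 : Nonempty (IsInitial (F.obj (⊥_ A))))
    (ψ : ∀ X Y : A, F.obj X ⨿ F.obj Y ≅ F.obj (X ⨿ Y))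
    (nat : ∀ {X X' Y Y' : A} (f : X ⟶ X') (g : Y ⟶ Y'),
      coprod.map (F.map f) (F.map g) ≫ (ψ X' Y').hom =
        (ψ X Y).hom ≫ F.map (coprod.map f g)) :
    ∀ X Y : A, IsIso (coprod.desc (F.map coprod.inl) (F.map coprod.inr) :
      F.obj X ⨿ F.obj Y ⟶ F.obj (X ⨿ Y)) := by
  obtain ⟨hB⟩ := h0
  intro X Y
  -- `inl : X ⟶ X ⨿ ⊥` is an iso in A
  haveI hA1 : IsIso (coprod.inl : X ⟶ X ⨿ (⊥_ A)) := by
    refine ⟨coprod.desc (𝟙 X) (initial.to X), by simp [coprod.inl_desc, coprod.inr_desc], ?_⟩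
    apply coprod.hom_ext
    · simp [coprod.inl_desc, coprod.inr_desc]
    · simp; apply initial.hom_ext
  haveI hA2 : IsIso (coprod.inr : Y ⟶ (⊥_ A) ⨿ Y) := by
    refine ⟨coprod.desc (initial.to Y) (𝟙 Y), by simp [coprod.inl_desc, coprod.inr_desc], ?_⟩
    apply coprod.hom_ext
    · simp; apply initial.hom_ext
    · simp [coprod.inl_desc, coprod.inr_desc]
  -- `inl : FX ⟶ FX ⨿ F⊥` is an iso in B since `F⊥` is initial
  haveI hB1 : IsIso (coprod.inl : F.obj X ⟶ F.obj X ⨿ F.obj (⊥_ A)) := by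
    refine ⟨coprod.desc (𝟙 _) (hB.to _), by simp [coprod.inl_desc, coprod.inr_desc], ?_⟩
    apply coprod.hom_ext
    · simp [coprod.inl_desc, coprod.inr_desc]
    · simp [hB.hom_ext (hB.to _ ≫ coprod.inl) coprod.inr]
  haveI hB2 : IsIso (coprod.inr : F.obj Y ⟶ F.obj (⊥_ A) ⨿ F.obj Y) := by
    refine ⟨coprod.desc (hB.to _) (𝟙 _), by simp [coprod.inl_desc, coprod.inr_desc], ?_⟩
    apply coprod.hom_ext
    · simp [hB.hom_ext (hB.to _ ≫ coprod.inr) coprod.inl]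
    · simp [coprod.inl_desc, coprod.inr_desc]
  set s : F.obj X ⟶ F.obj (X ⨿ (⊥_ A)) := coprod.inl ≫ (ψ X (⊥_ A)).hom with hs
  set t : F.obj Y ⟶ F.obj ((⊥_ A) ⨿ Y) := coprod.inr ≫ (ψ (⊥_ A) Y).hom with ht
  haveI : IsIso s := by rw [hs]; infer_instance
  haveI : IsIso t := by rw [ht]; infer_instance
  set eX : F.obj X ⟶ F.obj X := F.map (coprod.inl : X ⟶ X ⨿ (⊥_ A)) ≫ inv s with heX
  set eY : F.obj Y ⟶ F.obj Y := F.map (coprod.inr : Y ⟶ (⊥_ A) ⨿ Y) ≫ inv t with heY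
  haveI : IsIso eX := by rw [heX]; infer_instance
  haveI : IsIso eY := by rw [heY]; infer_instance
  have hnatX := nat (𝟙 X) (initial.to Y)
  have hnatY := nat (initial.to X) (𝟙 Y)
  -- key identities
  have hL : (coprod.inl : F.obj X ⟶ _) ≫ (ψ X Y).hom =
      s ≫ F.map (coprod.map (𝟙 X) (initial.to Y)) := by
    rw [hs, Category.assoc, ← hnatX, ← Category.assoc, coprod.inl_map, F.map_id,
      Category.id_comp]
  have hR : (coprod.inr : F.obj Y ⟶ _) ≫ (ψ X Y).hom =
      t ≫ F.map (coprod.map (initial.to X) (𝟙 Y)) := by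
    rw [ht, Category.assoc, ← hnatY, ← Category.assoc, coprod.inr_map, F.map_id,
      Category.id_comp]
  have hFL : F.map (coprod.inl : X ⟶ X ⨿ Y) = eX ≫ coprod.inl ≫ (ψ X Y).hom := by
    rw [hL, heX, Category.assoc, IsIso.inv_hom_id_assoc, ← F.map_comp, coprod.inl_map,
      Category.id_comp]
  have hFR : F.map (coprod.inr : Y ⟶ X ⨿ Y) = eY ≫ coprod.inr ≫ (ψ X Y).hom := by
    rw [hR, heY, Category.assoc, IsIso.inv_hom_id_assoc, ← F.map_comp, coprod.inr_map,
      Category.id_comp]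
  have hdesc : (coprod.desc (F.map coprod.inl) (F.map coprod.inr) :
      F.obj X ⨿ F.obj Y ⟶ F.obj (X ⨿ Y)) = coprod.map eX eY ≫ (ψ X Y).hom := by
    apply coprod.hom_ext <;> simp [hFL, hFR, coprod.inl_desc, coprod.inr_desc]
  rw [hdesc]
  infer_instance
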